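/- Let G ≅ (ℤ/5ℤ)² with automorphism σ satisfying σ⁵ = id and the norm relation A^(1+σ+σ²+σ³+σ⁴) = 1 for all A ∈ G. If A ∈ G is not fixed by σ, then the element A^(σ³ + 3σ² + 2σ − 1) (computed in the ℤ[σ]-module structure on G) is fixed by σ. -/
import Mathlib

private lemma zmod5_five_smul : ∀ x : ZMod 5, x + x + x + x + x = 0 := by decide

private lemma zmod5_five_eq_zero : (5 : ZMod 5) = 0 := by decide

set_option maxHeartbeats 1000000 in
/-- If `G ≅ (ℤ/5ℤ)²` with automorphism `σ` satisfying `σ⁵ = id` and the norm relation,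
and `A ∈ G` is not fixed by `σ`, then `A^(σ³ + 3σ² + 2σ - 1)` is fixed by `σ`. -/
theorem stmt2 (G : Type*) [Group G]
    (e : G ≃* Multiplicative (ZMod 5) × Multiplicative (ZMod 5))
    (σ : MulAut G) (hσ : σ ^ 5 = 1)
    (hnorm : ∀ A : G, A * σ A * (σ ^ 2) A * (σ ^ 3) A * (σ ^ 4) A = 1)
    (A : G) (hA : σ A ≠ A) :
    σ ((σ ^ 3) A * ((σ ^ 2) A) ^ 3 * (σ A) ^ 2 * A⁻¹)
      = (σ ^ 3) A * ((σ ^ 2) A) ^ 3 * (σ A) ^ 2 * A⁻¹ := by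
  haveI : Fact (Nat.Prime 5) := ⟨by norm_num⟩
  let φ : G ≃* Multiplicative (ZMod 5 × ZMod 5) :=
    e.trans (MulEquiv.prodMultiplicative (ZMod 5) (ZMod 5)).symm
  let T : Multiplicative (ZMod 5 × ZMod 5) ≃* Multiplicative (ZMod 5 × ZMod 5) :=
    (φ.symm.trans σ).trans φ
  let ψ : G → ZMod 5 × ZMod 5 := fun g => Multiplicative.toAdd (φ g)
  have hψinj : Function.Injective ψ := fun x y h => φ.injective (Multiplicative.toAdd.injective h)
  have hψmul : ∀ x y : G, ψ (x * y) = ψ x + ψ y := by intro x y; simp [ψ, map_mul]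
  have hψpow : ∀ (x : G) (n : ℕ), ψ (x ^ n) = n • ψ x := by intro x n; simp [ψ, map_pow]
  have hψinv : ∀ x : G, ψ x⁻¹ = -ψ x := by intro x; simp [ψ, map_inv]
  have hψone : ψ 1 = 0 := by simp [ψ]
  let F0 : (ZMod 5 × ZMod 5) →+ (ZMod 5 × ZMod 5) :=
    { toFun := fun v => Multiplicative.toAdd (T (Multiplicative.ofAdd v))
      map_zero' := by simp
      map_add' := by
        intro x y
        simp [ofAdd_add, map_mul, toAdd_mul] }
  let F : Module.End (ZMod 5) (ZMod 5 × ZMod 5) := F0.toZModLinearMap 5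
  have hψσ : ∀ g : G, ψ (σ g) = F (ψ g) := by
    intro g
    show ψ (σ g) = Multiplicative.toAdd (T (Multiplicative.ofAdd (Multiplicative.toAdd (φ g))))
    simp [T, ψ]
  have hσ2 : ∀ g : G, (σ ^ 2) g = σ (σ g) := by intro g; simp [pow_succ]
  have hσ3 : ∀ g : G, (σ ^ 3) g = σ (σ (σ g)) := by intro g; simp [pow_succ]
  have hσ4 : ∀ g : G, (σ ^ 4) g = σ (σ (σ (σ g))) := by intro g; simp [pow_succ]
  have hnormF : ∀ v : ZMod 5 × ZMod 5,
      v + F v + F (F v) + F (F (F v)) + F (F (F (F v))) = 0 := by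
    intro v
    obtain ⟨g, hg⟩ : ∃ g : G, ψ g = v := ⟨φ.symm (Multiplicative.ofAdd v), by simp [ψ]⟩
    have h := congrArg ψ (hnorm g)
    rw [hσ2, hσ3, hσ4] at h
    simp only [hψmul, hψσ, hψone] at h
    rw [hg] at h
    exact h
  have hsum : F ^ 4 + F ^ 3 + F ^ 2 + F + 1 = 0 := by
    apply LinearMap.ext
    intro v
    simp only [LinearMap.add_apply, LinearMap.zero_apply, Module.End.one_apply,
      pow_succ, pow_zero, Module.End.mul_apply, one_mul]
    rw [← hnormF v]; abel
  have hpoly : ((Polynomial.X : Polynomial (ZMod 5)) - 1) ^ 4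
      = Polynomial.X ^ 4 + Polynomial.X ^ 3 + Polynomial.X ^ 2 + Polynomial.X + 1 := by
    have h5 : (5 : Polynomial (ZMod 5)) = 0 := by
      have := (map_ofNat (Polynomial.C : ZMod 5 →+* Polynomial (ZMod 5)) 5).symm
      rw [this, zmod5_five_eq_zero, map_zero]
    linear_combination (Polynomial.X ^ 2 - Polynomial.X ^ 3 - Polynomial.X) * h5
  have h4 : (F - 1) ^ 4 = 0 := by
    have h1 : Polynomial.aeval F (((Polynomial.X : Polynomial (ZMod 5)) - 1) ^ 4) = (F - 1) ^ 4 := by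
      simp
    have h2 : Polynomial.aeval F ((Polynomial.X : Polynomial (ZMod 5)) ^ 4 + Polynomial.X ^ 3
        + Polynomial.X ^ 2 + Polynomial.X + 1) = F ^ 4 + F ^ 3 + F ^ 2 + F + 1 := by
      simp
    rw [← h1, hpoly, h2, hsum]
  have hrank : Module.finrank (ZMod 5) (ZMod 5 × ZMod 5) = 2 := by
    rw [Module.finrank_prod, Module.finrank_self]
  have h2 : (F - 1) ^ 2 = 0 := by
    apply LinearMap.ext
    intro v
    have hv : v ∈ LinearMap.ker ((F - 1) ^ 4) := by rw [h4]; simp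
    have := Module.End.ker_pow_le_ker_pow_finrank (F - 1) 4 hv
    rw [hrank] at this
    simpa using this
  have key : ∀ v : ZMod 5 × ZMod 5, F (F v) = F v + F v - v := by
    intro v
    have h := LinearMap.ext_iff.mp h2 v
    simp only [pow_succ, pow_zero, one_mul, Module.End.mul_apply, LinearMap.sub_apply,
      Module.End.one_apply, LinearMap.zero_apply, map_sub] at h
    rw [← sub_eq_zero, ← h]; abel
  set a := ψ A with ha
  have k2 : F (F a) = F a + F a - a := key a
  have k3 : F (F (F a)) = F a + F a + F a - (a + a) := by
    rw [k2, map_sub, map_add, k2]; abel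
  have k4 : F (F (F (F a))) = F a + F a + F a + F a - (a + a + a) := by
    rw [k3, map_sub, map_add, map_add, map_add, k2]; abel
  have h5v : ∀ w : ZMod 5 × ZMod 5, w + w + w + w + w = 0 := by
    intro w
    exact Prod.ext (zmod5_five_smul w.1) (zmod5_five_smul w.2)
  apply hψinj
  rw [hσ2, hσ3]
  simp only [hψmul, hψinv, hψpow, hψσ]
  simp only [map_add, map_nsmul, map_neg]
  rw [k4, k3, k2]
  rw [← sub_eq_zero, ← h5v (F a - a)]
  abel
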